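/- Siegel's lemma, full version: for every complex symmetric n×n matrix Z with positive definite imaginary part, every principal minor Δ_j(Z) (the determinant of the upper-left j×j block) is nonzero, for 1 ≤ j ≤ n. -/

import Mathlib

open Matrix Finset

-- sum over range of injective map
lemma sum_range_inj {m n : Type*} [Fintype m] [Fintype n] [DecidableEq n]
    {e : m → n} (he : Function.Injective e) {M : Type*} [AddCommMonoid M]
    (F : n → M) (hF : ∀ i, (∀ k, e k ≠ i) → F i = 0) :
    ∑ i, F i = ∑ k, F (e k) := by
  rw [← Finset.sum_image (g := e) (f := F) (by intro x _ y _ h; exact he h)]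
  refine (Finset.sum_subset (Finset.subset_univ _) ?_).symm
  intro i _ hi
  exact hF i (fun k hk => hi (Finset.mem_image.mpr ⟨k, Finset.mem_univ _, hk⟩))

lemma posdef_submatrix_inj {m n : Type*} [Fintype m] [Fintype n] [DecidableEq n] [DecidableEq m]
    {M : Matrix n n ℝ} (hM : M.PosDef) {e : m → n} (he : Function.Injective e) :
    (M.submatrix e e).PosDef := by
  refine Matrix.PosDef.of_dotProduct_mulVec_pos ?_ ?_
  · have := hM.1
    unfold Matrix.IsHermitian at *
    rw [conjTranspose_submatrix, this]
  · intro x hx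
    classical
    set y : n → ℝ := fun i => if h : ∃ k, e k = i then x h.choose else 0 with hy
    have hyk : ∀ k, y (e k) = x k := by
      intro k
      have h : ∃ k', e k' = e k := ⟨k, rfl⟩
      simp only [hy, dif_pos h]
      exact congrArg x (he h.choose_spec)
    have hy0 : ∀ i, (∀ k, e k ≠ i) → y i = 0 := by
      intro i hi
      have : ¬ ∃ k, e k = i := fun ⟨k, hk⟩ => hi k hk
      simp only [hy, dif_neg this]
    have hyne : y ≠ 0 := by
      intro h
      apply hx
      funext k
      have := congrFun h (e k)
      rw [hyk k] at this
      exact this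
    have key : star y ⬝ᵥ M *ᵥ y = star x ⬝ᵥ (M.submatrix e e) *ᵥ x := by
      simp only [dotProduct, mulVec, star, Pi.star_apply, star_trivial]
      rw [sum_range_inj he _ (by
        intro i hi
        rw [hy0 i hi]
        simp)]
      refine Finset.sum_congr rfl fun k _ => ?_
      rw [hyk, sum_range_inj he _ (by
        intro i hi
        rw [hy0 i hi]
        ring)]
      simp only [submatrix_apply]
      refine congrArg _ (Finset.sum_congr rfl fun l _ => ?_)
      rw [hyk]
    have := hM.dotProduct_mulVec_pos hyne
    rwa [key] at this

lemma det_ne_zero_of_im_posdef {m : ℕ} {Z : Matrix (Fin m) (Fin m) ℂ}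
    (hsym : Zᵀ = Z) (hpos : (Z.map Complex.im).PosDef) : Z.det ≠ 0 := by
  intro hdet
  obtain ⟨v, hZv, hv⟩ := Matrix.exists_mulVec_eq_zero_iff.mpr hdet
  set a : Fin m → ℝ := fun i => (v i).re with ha
  set b : Fin m → ℝ := fun i => (v i).im with hb
  set Y : Matrix (Fin m) (Fin m) ℝ := Z.map Complex.im with hY
  have hsym' : ∀ i j, Z j i = Z i j := fun i j => congrFun (congrFun hsym i) j
  have hzero : (star v ⬝ᵥ Z *ᵥ v) = 0 := by rw [hv]; simp
  have him : (star v ⬝ᵥ Z *ᵥ v).im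
      = (a ⬝ᵥ Y *ᵥ a + b ⬝ᵥ Y *ᵥ b)
        + (∑ i, ∑ j, (a i * (Z i j).re * b j - b i * (Z i j).re * a j)) := by
    simp only [dotProduct, mulVec, Pi.star_apply, Finset.mul_sum, Complex.im_sum]
    rw [← Finset.sum_add_distrib, ← Finset.sum_add_distrib]
    refine Finset.sum_congr rfl fun i _ => ?_
    rw [← Finset.sum_add_distrib, ← Finset.sum_add_distrib]
    refine Finset.sum_congr rfl fun j _ => ?_
    simp only [hY, Matrix.map_apply, Complex.mul_im, Complex.mul_re, ha, hb,
      RCLike.star_def, Complex.conj_re, Complex.conj_im]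
    ring
  have hcancel : (∑ i, ∑ j, (a i * (Z i j).re * b j - b i * (Z i j).re * a j)) = 0 := by
    have key : (∑ i, ∑ j, a i * (Z i j).re * b j) = ∑ i, ∑ j, b i * (Z i j).re * a j := by
      rw [Finset.sum_comm]
      refine Finset.sum_congr rfl fun i _ => Finset.sum_congr rfl fun j _ => ?_
      rw [hsym' j i]
      ring
    simp only [Finset.sum_sub_distrib]
    rw [key, sub_self]
  rw [hzero] at him
  have hab : a ≠ 0 ∨ b ≠ 0 := by
    by_contra h
    push_neg at h
    apply hZv
    funext i
    have h1 := congrFun h.1 i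
    have h2 := congrFun h.2 i
    simp only [ha, hb, Pi.zero_apply] at h1 h2
    exact Complex.ext h1 h2
  have hge : ∀ x : Fin m → ℝ, 0 ≤ x ⬝ᵥ Y *ᵥ x := by
    intro x
    have := hpos.posSemidef.dotProduct_mulVec_nonneg x
    simpa using this
  have hgt : 0 < a ⬝ᵥ Y *ᵥ a + b ⬝ᵥ Y *ᵥ b := by
    rcases hab with h | h
    · have := hpos.dotProduct_mulVec_pos h
      simp only [star_trivial] at this
      exact add_pos_of_pos_of_nonneg this (hge b)
    · have := hpos.dotProduct_mulVec_pos h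
      simp only [star_trivial] at this
      exact add_pos_of_nonneg_of_pos (hge a) this
  rw [hcancel, add_zero, Complex.zero_im] at him
  exact absurd him.symm (ne_of_gt hgt)

theorem siegel_lemma_minors (n : ℕ) (Z : Matrix (Fin n) (Fin n) ℂ)
    (hsym : Zᵀ = Z) (hpos : (Z.map Complex.im).PosDef)
    (j : ℕ) (hj1 : 1 ≤ j) (hjn : j ≤ n) :
    (Z.submatrix (Fin.castLE hjn) (Fin.castLE hjn)).det ≠ 0 := by
  apply det_ne_zero_of_im_posdef
  · rw [transpose_submatrix, hsym]
  · rw [← submatrix_map]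
    exact posdef_submatrix_inj hpos (Fin.castLE_injective hjn)
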